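/- arXiv:2205.12525 — 5 statements merged into one kernel-verified Lean document; each statement's English description precedes it below -/
import Mathlib

section
/- Let H be a complex Hilbert space and let A and B be compact operators on H. If A + B + A ∘ B = 0, then A ∘ B = B ∘ A. -/
open Metric Set Filter Topology

section Fredholm

variable {H : Type*} [NormedAddCommGroup H] [InnerProductSpace ℂ H] [CompleteSpace H]

/-- Compact operators send bounded sequences to sequences with convergent subsequences. -/
lemma IsCompactOperator.exists_subseq_tendsto (B : H →L[ℂ] H) (hB : IsCompactOperator B)
    (u : ℕ → H) (hu : ∀ n, ‖u n‖ ≤ 1) :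
    ∃ y : H, ∃ φ : ℕ → ℕ, StrictMono φ ∧ Tendsto (fun n => B (u (φ n))) atTop (𝓝 y) := by
  have hB' : IsCompactOperator (B.toLinearMap) := hB
  obtain ⟨K, hK, hKs⟩ := hB'.image_closedBall_subset_compact 1
  have hmem : ∀ n, B (u n) ∈ K := fun n =>
    hKs ⟨u n, by simpa [Metric.mem_closedBall, dist_eq_norm] using hu n, rfl⟩
  obtain ⟨y, -, φ, hφ, hy⟩ := hK.tendsto_subseq hmem
  exact ⟨y, φ, hφ, hy⟩

/-- If `1 + B` is injective with `B` compact, it is bounded below. -/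
lemma bounded_below_of_injective (B : H →L[ℂ] H) (hB : IsCompactOperator B)
    (hinj : Function.Injective ((1 : H →L[ℂ] H) + B)) :
    ∃ c : ℝ, 0 < c ∧ ∀ x, c * ‖x‖ ≤ ‖((1 : H →L[ℂ] H) + B) x‖ := by
  by_contra hc
  push_neg at hc
  have key : ∀ n : ℕ, ∃ u : H, ‖u‖ = 1 ∧ ‖((1 : H →L[ℂ] H) + B) u‖ < 1 / (n + 1) := by
    intro n
    obtain ⟨x, hx⟩ := hc (1 / (n + 1)) (by positivity)
    have hx0 : x ≠ 0 := by
      rintro rfl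
      simp at hx
    refine ⟨‖x‖⁻¹ • x, ?_, ?_⟩
    · simp [norm_smul, norm_ne_zero_iff.2 hx0, inv_mul_cancel₀]
    · rw [ContinuousLinearMap.map_smul_of_tower, norm_smul]
      simp only [norm_inv, norm_norm]
      rw [inv_mul_lt_iff₀ (norm_pos_iff.2 hx0)]
      linarith [hx]
  choose u hu1 hu2 using key
  obtain ⟨y, φ, hφ, hy⟩ := IsCompactOperator.exists_subseq_tendsto B hB u (fun n => (hu1 n).le)
  have hT0 : Tendsto (fun n => ((1 : H →L[ℂ] H) + B) (u (φ n))) atTop (𝓝 0) := by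
    rw [tendsto_iff_norm_sub_tendsto_zero]
    simp only [sub_zero]
    refine squeeze_zero (fun n => norm_nonneg _) (fun n => ?_)
      tendsto_one_div_add_atTop_nhds_zero_nat
    have h1 : (1 : ℝ) / (φ n + 1) ≤ 1 / (n + 1) := by
      have h2 : (n : ℝ) + 1 ≤ (φ n : ℝ) + 1 := by
        exact_mod_cast Nat.succ_le_succ hφ.le_apply
      exact one_div_le_one_div_of_le (by positivity) h2
    exact le_trans (hu2 (φ n)).le h1
  have hulim : Tendsto (fun n => u (φ n)) atTop (𝓝 (-y)) := by
    have h1 := hT0.sub hy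
    rw [zero_sub] at h1
    refine h1.congr fun n => ?_
    simp
  have hny : ‖(-y : H)‖ = 1 := by
    refine tendsto_nhds_unique hulim.norm ?_
    exact tendsto_const_nhds.congr fun n => (hu1 (φ n)).symm
  have hTy : ((1 : H →L[ℂ] H) + B) (-y) = 0 :=
    tendsto_nhds_unique ((((1 : H →L[ℂ] H) + B).continuous.tendsto (-y)).comp hulim) hT0
  have : (-y : H) = 0 := hinj (by simpa using hTy)
  rw [this] at hny; simp at hny

/-- Fredholm alternative: if `B` is compact and `1 + B` injective, then `1 + B` is surjective. -/
lemma surjective_of_injective_one_add (B : H →L[ℂ] H) (hB : IsCompactOperator B)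
    (hinj : Function.Injective ((1 : H →L[ℂ] H) + B)) :
    Function.Surjective ((1 : H →L[ℂ] H) + B) := by
  set T : H →L[ℂ] H := (1 : H →L[ℂ] H) + B with hT
  obtain ⟨c, hc, hcb⟩ := bounded_below_of_injective B hB hinj
  -- T^n is bounded below by c^n
  have hpow : ∀ n : ℕ, ∀ x : H, c ^ n * ‖x‖ ≤ ‖(T ^ n) x‖ := by
    intro n
    induction n with
    | zero => intro x; simp
    | succ n ih =>
      intro x
      have h1 : (T ^ (n + 1)) x = T ((T ^ n) x) := by
        rw [pow_succ']; rfl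
      rw [h1]
      calc c ^ (n+1) * ‖x‖ = c * (c ^ n * ‖x‖) := by ring
        _ ≤ c * ‖(T ^ n) x‖ := by nlinarith [ih x]
        _ ≤ ‖T ((T ^ n) x)‖ := hcb _
  -- range of T^n is closed
  have hclosed : ∀ n : ℕ, IsClosed ((LinearMap.range ((T ^ n : H →L[ℂ] H) : H →ₗ[ℂ] H) : Submodule ℂ H) : Set H) := by
    intro n
    have hb : ∀ x : H, ‖x‖ ≤ (⟨(c ^ n)⁻¹, by positivity⟩ : NNReal) * ‖(T ^ n) x‖ := by
      intro x
      show ‖x‖ ≤ (c ^ n)⁻¹ * ‖(T ^ n) x‖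
      rw [← div_eq_inv_mul, le_div_iff₀ (by positivity)]
      calc ‖x‖ * c ^ n = c ^ n * ‖x‖ := by ring
        _ ≤ ‖(T ^ n) x‖ := hpow n x
    have := ((T ^ n).antilipschitz_of_bound hb).isClosed_range (T ^ n).uniformContinuous
    rw [LinearMap.coe_range]; exact this
  by_contra hsurj
  obtain ⟨v, hv⟩ := not_forall.mp hsurj
  have hu : ∃ u : H, u ∉ Set.range T := ⟨v, fun ⟨w, hw⟩ => hv ⟨w, hw⟩⟩
  obtain ⟨u, hu⟩ := hu
  have hTinj : ∀ n : ℕ, Function.Injective (⇑(T ^ n)) := by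
    intro n
    induction n with
    | zero => simp [Function.Injective]
    | succ n ih =>
      have : ⇑(T ^ (n+1)) = ⇑(T ^ n) ∘ ⇑T := by
        ext x; rw [pow_succ]; rfl
      rw [this]; exact ih.comp hinj
  -- the submodules
  set Kn : ℕ → Submodule ℂ H := fun n => LinearMap.range ((T ^ n : H →L[ℂ] H) : H →ₗ[ℂ] H) with hKn
  have hmono : ∀ m n : ℕ, n ≤ m → Kn m ≤ Kn n := by
    intro m n hnm x hx
    obtain ⟨w, rfl⟩ := hx
    have : T ^ m = T ^ n * T ^ (m - n) := by rw [← pow_add]; congr 1; omega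
    rw [this]
    exact ⟨(T ^ (m - n)) w, rfl⟩
  have hstrict : ∀ n : ℕ, (T ^ n) u ∉ Kn (n + 1) := by
    intro n h
    obtain ⟨w, hw⟩ := h
    have : (T ^ n) (T w) = (T ^ n) u := by
      rw [← hw, pow_succ]; rfl
    exact hu ⟨w, hTinj n this⟩
  -- pick the orthogonal unit vectors
  have hx : ∀ n : ℕ, ∃ x : H, ‖x‖ = 1 ∧ x ∈ Kn n ∧ x ∈ (Kn (n + 1))ᗮ := by
    intro n
    haveI : CompleteSpace (Kn (n + 1)) := (hclosed (n + 1)).completeSpace_coe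
    set v' := (T ^ n) u with hv'
    set w := v' - (Submodule.orthogonalProjection (Kn (n + 1)) v' : H) with hw
    have hwo : w ∈ (Kn (n + 1))ᗮ := (Kn (n + 1)).sub_starProjection_mem_orthogonal v'
    have hwne : w ≠ 0 := by
      intro h0
      apply hstrict n
      have : v' = (Submodule.orthogonalProjection (Kn (n + 1)) v' : H) := by
        rwa [hw, sub_eq_zero] at h0
      rw [hv'] at this
      rw [this]; exact (Submodule.orthogonalProjection (Kn (n + 1)) v').2
    have hwmem : w ∈ Kn n := by
      apply Submodule.sub_mem
      · exact ⟨u, rfl⟩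
      · exact hmono (n + 1) n (by omega) (Submodule.orthogonalProjection (Kn (n + 1)) v').2
    refine ⟨‖w‖⁻¹ • w, ?_, Submodule.smul_mem _ _ hwmem, Submodule.smul_mem _ _ hwo⟩
    · rw [norm_smul]; simp [norm_ne_zero_iff.2 hwne, inv_mul_cancel₀]
  choose x hx1 hx2 hx3 using hx
  -- separation
  have hsep : ∀ n m : ℕ, n < m → (1 : ℝ) ≤ ‖B (x n) - B (x m)‖ := by
    intro n m hnm
    have hz : T (x n) - T (x m) + x m ∈ Kn (n + 1) := by
      have hTmap : ∀ k : ℕ, ∀ y ∈ Kn k, T y ∈ Kn (k + 1) := by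
        rintro k y ⟨w, rfl⟩
        exact ⟨w, by rw [pow_succ']; rfl⟩
      refine Submodule.add_mem _ (Submodule.sub_mem _ (hTmap n _ (hx2 n)) ?_) ?_
      · exact hmono (m + 1) (n + 1) (by omega) (hTmap m _ (hx2 m))
      · exact hmono m (n + 1) (by omega) (hx2 m)
    set z := T (x n) - T (x m) + x m with hzdef
    have hBeq : B (x n) - B (x m) = z - x n := by
      rw [hzdef, hT]
      simp [ContinuousLinearMap.add_apply]
      abel
    rw [hBeq]
    have hinner : inner ℂ (x n) z = (0 : ℂ) :=
      inner_eq_zero_symm.mpr (((Submodule.mem_orthogonal _ _).mp (hx3 n)) z hz)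
    have : (1 : ℝ) = ‖(inner ℂ (x n) (x n - z) : ℂ)‖ := by
      rw [inner_sub_right, hinner, sub_zero, inner_self_eq_norm_sq_to_K]
      simp [hx1 n]
    rw [this, ← norm_neg (z - x n), neg_sub]
    calc ‖(inner ℂ (x n) (x n - z) : ℂ)‖ ≤ ‖x n‖ * ‖x n - z‖ := norm_inner_le_norm _ _
      _ = ‖x n - z‖ := by rw [hx1 n, one_mul]
  -- contradiction with compactness
  obtain ⟨y, φ, hφ, hy⟩ := IsCompactOperator.exists_subseq_tendsto B hB x (fun n => (hx1 n).le)
  have hcauchy : CauchySeq (fun n => B (x (φ n))) := hy.cauchySeq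
  obtain ⟨N, hN⟩ := Metric.cauchySeq_iff.mp hcauchy 1 one_pos
  have h1 := hN (N + 1) (by omega) N (by omega)
  rw [dist_eq_norm] at h1
  have := hsep (φ N) (φ (N + 1)) (hφ (by omega))
  rw [← norm_neg, neg_sub] at this
  linarith

end Fredholm

/-- If `A, B` are compact operators on a complex Hilbert space with
`A + B + A ∘ B = 0`, then `A ∘ B = B ∘ A`. -/
theorem compact_add_add_mul_eq_zero_comm
    {H : Type*} [NormedAddCommGroup H] [InnerProductSpace ℂ H] [CompleteSpace H]
    (A B : H →L[ℂ] H) (hA : IsCompactOperator A) (hB : IsCompactOperator B)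
    (h : A + B + A * B = 0) : A * B = B * A := by
  have hXY : (1 + A) * (1 + B) = 1 := by
    have : (1 + A) * (1 + B) = 1 + (A + B + A * B) := by noncomm_ring
    rw [this, h, add_zero]
  have hinj : Function.Injective ⇑((1 : H →L[ℂ] H) + B) := by
    intro x y hxy
    have : ((1 + A) * (1 + B)) x = ((1 + A) * (1 + B)) y := by
      simp only [ContinuousLinearMap.mul_apply, hxy]
    rwa [hXY, ContinuousLinearMap.one_apply, ContinuousLinearMap.one_apply] at this
  have hsurj := surjective_of_injective_one_add B hB hinj
  have hYX : (1 + B) * (1 + A) = 1 := by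
    ext z
    obtain ⟨w, rfl⟩ := hsurj z
    have : ((1 + B) * (1 + A)) ((1 + B) w) = (1 + B) (((1 + A) * (1 + B)) w) := rfl
    rw [this, hXY]
    rfl
  have h' : B + A + B * A = 0 := by
    have : (1 + B) * (1 + A) = 1 + (B + A + B * A) := by noncomm_ring
    rw [this] at hYX
    exact add_left_cancel (by rw [hYX, add_zero])
  have h1 : A * B = -(A + B) := eq_neg_of_add_eq_zero_right h
  have h2 : B * A = -(B + A) := eq_neg_of_add_eq_zero_right h'
  rw [h1, h2, add_comm]
end

section
/- Let H be a complex Hilbert space, let A be a compact operator on H and let λ be a complex number. Then there exists a compact self-adjoint operator B on H such that |A + λ·1| = B + |λ|·1, where |X| denotes the absolute value √(X* ∘ X) of the operator X (the positive square root of X* ∘ X given by the continuous functional calculus) and X* denotes the Hilbert-space adjoint. -/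
set_option synthInstance.maxHeartbeats 1000000
set_option maxHeartbeats 1000000

open scoped InnerProductSpace
open ContinuousLinearMap in
lemma aux_norm_adjoint_sq {H : Type*} [NormedAddCommGroup H] [InnerProductSpace ℂ H]
    [CompleteSpace H] (A : H →L[ℂ] H) (u : H) :
    ‖adjoint A u‖ ^ 2 ≤ ‖(A * adjoint A) u‖ * ‖u‖ := by
  rw [← inner_self_eq_norm_sq (𝕜 := ℂ), adjoint_inner_left]
  calc RCLike.re ⟪u, A (adjoint A u)⟫_ℂ ≤ ‖⟪u, A (adjoint A u)⟫_ℂ‖ := RCLike.re_le_norm _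
    _ ≤ ‖u‖ * ‖A (adjoint A u)‖ := norm_inner_le_norm _ _
    _ = ‖(A * adjoint A) u‖ * ‖u‖ := by rw [mul_comm]; rfl

open ContinuousLinearMap in
lemma aux_isCompactOperator_adjoint {H : Type*} [NormedAddCommGroup H] [InnerProductSpace ℂ H]
    [CompleteSpace H] (A : H →L[ℂ] H) (hA : IsCompactOperator A) :
    IsCompactOperator ⇑(adjoint A) := by
  have hG : IsCompactOperator ⇑(A * adjoint A) := by
    have h := hA.comp_clm (adjoint A)
    have : ⇑(A * adjoint A) = ⇑A ∘ ⇑(adjoint A) := rfl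
    rwa [this]
  have htb : TotallyBounded ((⇑(adjoint A)) '' Metric.closedBall 0 1) := by
    rw [Metric.totallyBounded_iff]
    intro ε hε
    set δ : ℝ := ε ^ 2 / 4 with hδdef
    have hδ : 0 < δ := by positivity
    obtain ⟨K0, hK0c, hK0sub⟩ := hG.image_subset_compact_of_bounded
      (Metric.isBounded_closedBall (x := (0 : H)) (r := 1))
    have htbG : TotallyBounded ((⇑(A * adjoint A)) '' Metric.closedBall 0 1) :=
      hK0c.totallyBounded.subset hK0sub
    rw [totallyBounded_iff_subset] at htbG
    obtain ⟨t, hts, htf, htcov⟩ := htbG _ (Metric.dist_mem_uniformity (half_pos hδ))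
    have hpre : ∀ y ∈ t, ∃ x ∈ Metric.closedBall (0 : H) 1, (A * adjoint A) x = y := by
      intro y hy
      obtain ⟨x, hx, hxy⟩ := hts hy
      exact ⟨x, hx, hxy⟩
    choose! xf hxf1 hxf2 using hpre
    refine ⟨(fun y => adjoint A (xf y)) '' t, htf.image _, ?_⟩
    rintro - ⟨u, hu, rfl⟩
    have hGu : (A * adjoint A) u ∈ ⋃ y ∈ t, {x | dist x y < δ / 2} :=
      htcov (Set.mem_image_of_mem _ hu)
    simp only [Set.mem_iUnion, Set.mem_setOf_eq] at hGu
    obtain ⟨y, hy, hdy⟩ := hGu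
    refine Set.mem_iUnion₂.mpr ⟨adjoint A (xf y), Set.mem_image_of_mem _ hy, ?_⟩
    rw [Metric.mem_ball, dist_eq_norm]
    have hx1 : ‖xf y‖ ≤ 1 := by simpa using hxf1 y hy
    have hu1 : ‖u‖ ≤ 1 := by simpa using hu
    have key : ‖adjoint A u - adjoint A (xf y)‖ ^ 2 ≤ ‖(A * adjoint A) (u - xf y)‖ * ‖u - xf y‖ := by
      have := aux_norm_adjoint_sq A (u - xf y)
      simpa [map_sub] using this
    have h1 : ‖(A * adjoint A) (u - xf y)‖ < δ / 2 := by
      rw [map_sub]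
      have : (A * adjoint A) (xf y) = y := hxf2 y hy
      rw [this, ← dist_eq_norm]
      exact hdy
    have h2 : ‖u - xf y‖ ≤ 2 := by
      calc ‖u - xf y‖ ≤ ‖u‖ + ‖xf y‖ := norm_sub_le _ _
        _ ≤ 2 := by linarith
    have hsq : ‖adjoint A u - adjoint A (xf y)‖ ^ 2 < ε ^ 2 := by
      nlinarith [key, h1, h2, norm_nonneg (u - xf y), norm_nonneg ((A * adjoint A) (u - xf y)), half_pos hδ, hε]
    exact lt_of_pow_lt_pow_left₀ 2 hε.le hsq
  refine ⟨closure ((⇑(adjoint A)) '' Metric.closedBall 0 1), ?_, ?_⟩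
  · exact htb.closure.isCompact_of_isClosed isClosed_closure
  · exact Filter.mem_of_superset (Metric.closedBall_mem_nhds 0 one_pos)
      (fun x hx => subset_closure (Set.mem_image_of_mem _ hx))

open ContinuousLinearMap in
lemma aux_isCompactOperator_cfc {H : Type*} [NormedAddCommGroup H] [InnerProductSpace ℂ H]
    [CompleteSpace H] (K : H →L[ℂ] H) (hKsa : IsSelfAdjoint K) (hK : IsCompactOperator ⇑K)
    (g : ℝ → ℝ) (hg : Continuous g) (hg0 : g 0 = 0) :
    IsCompactOperator ⇑(cfc g K) := by
  have hclosed : IsClosed {f : H →L[ℂ] H | IsCompactOperator ⇑f} :=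
    isClosed_setOf_isCompactOperator
  have hmem : cfc g K ∈ closure {f : H →L[ℂ] H | IsCompactOperator ⇑f} := by
    rw [Metric.mem_closure_iff]
    intro ε hε
    obtain ⟨p, hp⟩ := exists_polynomial_near_of_continuousOn (-‖K‖) ‖K‖ g
      hg.continuousOn (ε / 4) (by positivity)
    set q : Polynomial ℝ := p - Polynomial.C (p.eval 0) with hqdef
    have hq0 : q.coeff 0 = 0 := by
      simp [hqdef, Polynomial.coeff_zero_eq_eval_zero]
    obtain ⟨r, hr⟩ := Polynomial.X_dvd_iff.mpr hq0
    refine ⟨Polynomial.aeval K q, ?_, ?_⟩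
    · -- the polynomial image is compact
      have heq : (Polynomial.aeval K q : H →L[ℂ] H) = K * Polynomial.aeval K r := by
        rw [hr, map_mul, Polynomial.aeval_X]
      have hcomp : IsCompactOperator (⇑K ∘ ⇑(Polynomial.aeval K r : H →L[ℂ] H)) :=
        hK.comp_clm _
      show IsCompactOperator ⇑(Polynomial.aeval K q : H →L[ℂ] H)
      rw [heq]
      exact hcomp
    · -- distance estimate
      have hspec : ∀ x ∈ spectrum ℝ K, x ∈ Set.Icc (-‖K‖) ‖K‖ := by
        intro x hx
        have h1 := spectrum.subset_closedBall_norm_mul (𝕜 := ℝ) K hx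
        rw [Metric.mem_closedBall, dist_zero_right] at h1
        have h2 : ‖(1 : H →L[ℂ] H)‖ ≤ 1 := norm_id_le
        have : ‖x‖ ≤ ‖K‖ := le_trans h1 (by nlinarith [norm_nonneg K])
        rw [Real.norm_eq_abs, abs_le] at this
        exact ⟨this.1, this.2⟩
      have h0mem : (0 : ℝ) ∈ Set.Icc (-‖K‖) ‖K‖ := by
        constructor <;> simp [norm_nonneg K]
      rw [dist_eq_norm, ← cfc_polynomial q K, ← cfc_sub g q.eval K]
      refine lt_of_le_of_lt (norm_cfc_le (c := ε / 2) (by positivity) ?_) (by linarith)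
      intro x hx
      have hx' := hspec x hx
      have h1 : |p.eval x - g x| < ε / 4 := hp x hx'
      have h2 : |p.eval 0 - g 0| < ε / 4 := hp 0 h0mem
      have hqx : q.eval x = p.eval x - p.eval 0 := by simp [hqdef]
      rw [Real.norm_eq_abs, hqx, hg0] at *
      have : |g x - (p.eval x - p.eval 0)| ≤ |g x - p.eval x| + |p.eval 0| := by
        have := abs_sub (g x - p.eval x) (-(p.eval 0))
        calc |g x - (p.eval x - p.eval 0)| = |(g x - p.eval x) + p.eval 0| := by ring_nf
          _ ≤ |g x - p.eval x| + |p.eval 0| := abs_add_le _ _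
      rw [abs_sub_comm (g x) (p.eval x)] at this
      simp only [sub_zero] at h2
      linarith
  rw [hclosed.closure_eq] at hmem
  exact hmem

open ContinuousLinearMap in
/-- Lemma 3.1 for `M = B(H)`: for a compact operator `A` and `λ ∈ ℂ`, the absolute
value `|A + λ·1| = √((A + λ·1)* ∘ (A + λ·1))` is of the form `B + |λ|·1` with `B`
compact and self-adjoint. -/
theorem abs_compact_plus_scalar
    {H : Type*} [NormedAddCommGroup H] [InnerProductSpace ℂ H] [CompleteSpace H]
    (A : H →L[ℂ] H) (hA : IsCompactOperator A) (l : ℂ) :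
    ∃ B : H →L[ℂ] H, IsCompactOperator B ∧ IsSelfAdjoint B ∧
      CFC.sqrt (adjoint (A + l • (1 : H →L[ℂ] H)) * (A + l • (1 : H →L[ℂ] H)))
        = B + ((‖l‖ : ℝ) : ℂ) • (1 : H →L[ℂ] H) := by
  set c : ℝ := ‖l‖ with hcdef
  have hc0 : (0 : ℝ) ≤ c := norm_nonneg l
  have hsmul : ∀ r : ℝ, ((r : ℂ)) • (1 : H →L[ℂ] H) = r • (1 : H →L[ℂ] H) := by
    intro r
    rw [← Complex.coe_algebraMap, algebraMap_smul]
  set K : H →L[ℂ] H := adjoint A * A + l • adjoint A + (starRingEnd ℂ l) • A with hKdef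
  have hconj : (starRingEnd ℂ l) * l = ((c ^ 2 : ℝ) : ℂ) := by
    rw [mul_comm, Complex.mul_conj, hcdef]
    norm_cast
    rw [Complex.sq_norm]
  have hT : adjoint (A + l • (1 : H →L[ℂ] H)) * (A + l • (1 : H →L[ℂ] H))
      = K + algebraMap ℝ (H →L[ℂ] H) (c ^ 2) := by
    rw [← star_eq_adjoint]
    have hstar : star (A + l • (1 : H →L[ℂ] H)) = adjoint A + (starRingEnd ℂ l) • 1 := by
      simp [star_smul, Complex.star_def, star_eq_adjoint]
    rw [hstar, Algebra.algebraMap_eq_smul_one, ← hsmul (c ^ 2), ← hconj, hKdef]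
    simp only [add_mul, mul_add, smul_mul_assoc, mul_smul_comm, mul_one, one_mul, smul_smul,
      smul_add]
    rw [mul_comm l ((starRingEnd ℂ) l)]
    abel
  have hTnn : 0 ≤ adjoint (A + l • (1 : H →L[ℂ] H)) * (A + l • (1 : H →L[ℂ] H)) := by
    rw [← star_eq_adjoint]
    exact star_mul_self_nonneg _
  have hKsa : IsSelfAdjoint K := by
    rw [IsSelfAdjoint, hKdef]
    simp only [star_add, star_smul, star_mul, star_eq_adjoint, adjoint_adjoint,
      Complex.star_def, Complex.conj_conj]
    abel
  have hKc : IsCompactOperator ⇑K := by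
    have h1 : IsCompactOperator ⇑(adjoint A) := aux_isCompactOperator_adjoint A hA
    have h2 : IsCompactOperator ⇑(adjoint A * A) := by
      have h := hA.clm_comp (adjoint A)
      exact h
    have h3 : IsCompactOperator ⇑(l • adjoint A) := by
      have := h1.smul l
      exact this
    have h4 : IsCompactOperator ⇑((starRingEnd ℂ l) • A) := by
      have := (hA : IsCompactOperator ⇑A).smul (starRingEnd ℂ l)
      exact this
    have := (h2.add h3).add h4
    exact this
  have hspec : ∀ x ∈ spectrum ℝ K, 0 ≤ x + c ^ 2 := by
    intro x hx
    have hmem : x + c ^ 2 ∈ spectrum ℝ (K + algebraMap ℝ (H →L[ℂ] H) (c ^ 2)) := by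
      rw [← spectrum.add_singleton_eq]
      exact Set.add_mem_add hx (Set.mem_singleton _)
    rw [← hT] at hmem
    exact spectrum_nonneg_of_nonneg hTnn hmem
  set f : ℝ → ℝ := fun x => Real.sqrt (x + c ^ 2) with hfdef
  have hfc : Continuous f := Real.continuous_sqrt.comp (continuous_id.add continuous_const)
  set S : H →L[ℂ] H := cfc f K with hSdef
  have hSnn : (0 : H →L[ℂ] H) ≤ S := cfc_nonneg fun x _ => Real.sqrt_nonneg _
  have hSsq : S * S = K + algebraMap ℝ (H →L[ℂ] H) (c ^ 2) := by
    rw [hSdef, ← cfc_mul f f K]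
    rw [cfc_congr (g := fun x : ℝ => x + c ^ 2) fun x hx => Real.mul_self_sqrt (hspec x hx)]
    rw [cfc_add (a := K) (fun x : ℝ => x) (fun _ => c ^ 2), cfc_id' ℝ K, cfc_const (c ^ 2) K]
  have hsqrtT : CFC.sqrt (adjoint (A + l • (1 : H →L[ℂ] H)) * (A + l • (1 : H →L[ℂ] H))) = S := by
    rw [hT]
    exact CFC.sqrt_unique hSsq hSnn
  refine ⟨S - (c : ℂ) • 1, ?_, ?_, ?_⟩
  · have hgc : Continuous fun x : ℝ => f x - c := hfc.sub continuous_const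
    have hg0 : (fun x : ℝ => f x - c) 0 = 0 := by
      simp [hfdef, Real.sqrt_sq hc0]
    have hcomp := aux_isCompactOperator_cfc K hKsa hKc _ hgc hg0
    have heq : cfc (fun x : ℝ => f x - c) K = S - (c : ℂ) • 1 := by
      rw [cfc_sub f (fun _ => c) K, cfc_const c K, Algebra.algebraMap_eq_smul_one, ← hsmul c,
        hSdef]
    rwa [heq] at hcomp
  · have h1 : IsSelfAdjoint S := .of_nonneg hSnn
    have h2 : IsSelfAdjoint ((c : ℂ) • (1 : H →L[ℂ] H)) := by
      rw [IsSelfAdjoint, star_smul, star_one, Complex.star_def, Complex.conj_ofReal]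
    exact h1.sub h2
  · rw [hsqrtT]
    abel
end

section
/- Let H be a complex Hilbert space, let A be a bounded operator on H of finite rank and let λ be a complex number, and set X = A + λ·1. Then there exist a bounded operator B on H of finite rank and a complex number μ such that X ∘ (B + μ·1) ∘ X = X. That is, the unital algebra of finite-rank-plus-scalar operators is a (von Neumann) regular ring. -/
/-- Every endomorphism of a vector space admits a generalized inverse. -/
lemma exists_linearMap_mul_eq {K V : Type*} [Field K] [AddCommGroup V] [Module K V]
    (f : V →ₗ[K] V) : ∃ g : V →ₗ[K] V, f ∘ₗ g ∘ₗ f = f := by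
  obtain ⟨q, hq⟩ := (LinearMap.range f).exists_isCompl
  obtain ⟨g, hg⟩ := f.rangeRestrict.exists_rightInverse_of_surjective f.range_rangeRestrict
  refine ⟨g ∘ₗ Submodule.projectionOnto _ q hq, ?_⟩
  ext v
  have h1 : Submodule.projectionOnto _ q hq (f v) = ⟨f v, ⟨v, rfl⟩⟩ := by
    have := Submodule.projectionOnto_apply_left hq (⟨f v, ⟨v, rfl⟩⟩ : LinearMap.range f)
    simpa using this
  have h2 : f.rangeRestrict (g ⟨f v, ⟨v, rfl⟩⟩) = ⟨f v, ⟨v, rfl⟩⟩ := by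
    have := LinearMap.congr_fun hg (⟨f v, ⟨v, rfl⟩⟩ : LinearMap.range f)
    exact this
  have h3 : f (g ⟨f v, ⟨v, rfl⟩⟩) = f v := congrArg Subtype.val h2
  simp [LinearMap.comp_apply, h1, h3]

/-- The unital algebra of finite-rank-plus-scalar operators on a complex Hilbert
space is a von Neumann regular ring: for `X = A + λ·1` with `A` of finite rank there
exist a finite-rank `B` and `μ ∈ ℂ` with `X ∘ (B + μ·1) ∘ X = X`. -/
theorem finiteRank_plus_scalar_regular
    {H : Type*} [NormedAddCommGroup H] [InnerProductSpace ℂ H] [CompleteSpace H]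
    (A : H →L[ℂ] H) (hA : FiniteDimensional ℂ (LinearMap.range (A : H →ₗ[ℂ] H))) (l : ℂ)
    (X : H →L[ℂ] H) (hX : X = A + l • (1 : H →L[ℂ] H)) :
    ∃ (B : H →L[ℂ] H) (m : ℂ), FiniteDimensional ℂ (LinearMap.range (B : H →ₗ[ℂ] H)) ∧
      X * (B + m • (1 : H →L[ℂ] H)) * X = X := by
  classical
  haveI := hA
  haveI : CompleteSpace (LinearMap.ker (A : H →ₗ[ℂ] H)) :=
    (ContinuousLinearMap.isClosed_ker A).completeSpace_coe
  -- `(ker A)ᗮ` is finite-dimensional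
  have hinjmem : ∀ x : (LinearMap.ker (A : H →ₗ[ℂ] H))ᗮ, A x ∈ LinearMap.range (A : H →ₗ[ℂ] H) := fun x => ⟨x, rfl⟩
  let φ : (LinearMap.ker (A : H →ₗ[ℂ] H))ᗮ →ₗ[ℂ] (LinearMap.range (A : H →ₗ[ℂ] H)) :=
    LinearMap.codRestrict _ (A.toLinearMap ∘ₗ (Submodule.subtype _)) hinjmem
  have hφinj : Function.Injective φ := by
    intro x y hxy
    have h0 : A ((x : H) - y) = 0 := by
      have : A (x : H) = A (y : H) := congrArg Subtype.val hxy
      simp [map_sub, this]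
    have hmem : ((x : H) - y) ∈ LinearMap.ker (A : H →ₗ[ℂ] H) := h0
    have hmem' : ((x : H) - y) ∈ (LinearMap.ker (A : H →ₗ[ℂ] H))ᗮ := sub_mem x.2 y.2
    have := hmem' _ hmem
    have hz : (x : H) - y = 0 := by
      simpa [inner_self_eq_zero] using this
    exact Subtype.ext (sub_eq_zero.mp hz)
  haveI : FiniteDimensional ℂ ((LinearMap.ker (A : H →ₗ[ℂ] H))ᗮ) := FiniteDimensional.of_injective φ hφinj
  set V : Submodule ℂ H := LinearMap.range (A : H →ₗ[ℂ] H) ⊔ (LinearMap.ker (A : H →ₗ[ℂ] H))ᗮ with hV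
  haveI : FiniteDimensional ℂ V := Submodule.finiteDimensional_sup _ _
  haveI : CompleteSpace V := FiniteDimensional.complete ℂ V
  -- `X` maps `V` into `V`
  have hVX : ∀ x ∈ V, X x ∈ V := by
    intro x hx
    rw [hX]
    have h1 : A x ∈ V := le_sup_left (α := Submodule ℂ H) ⟨x, rfl⟩
    have h2 : l • x ∈ V := V.smul_mem l hx
    simpa using V.add_mem h1 h2
  -- `A` vanishes on `Vᗮ`
  have hAw : ∀ w ∈ Vᗮ, A w = 0 := by
    intro w hw
    have h1 : Vᗮ ≤ ((LinearMap.ker (A : H →ₗ[ℂ] H))ᗮ)ᗮ := Submodule.orthogonal_le le_sup_right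
    have h2 : w ∈ ((LinearMap.ker (A : H →ₗ[ℂ] H))ᗮ)ᗮ := h1 hw
    rw [Submodule.orthogonal_orthogonal] at h2
    exact h2
  have hXw : ∀ w ∈ Vᗮ, X w = l • w := by
    intro w hw
    rw [hX]
    simp [hAw w hw]
  -- restriction of `X` to `V` and its generalized inverse
  let XV : V →ₗ[ℂ] V := X.toLinearMap.restrict hVX
  obtain ⟨YV, hYV⟩ := exists_linearMap_mul_eq XV
  let Ycl : V →L[ℂ] V := LinearMap.toContinuousLinearMap YV
  set m : ℂ := if l = 0 then 0 else l⁻¹ with hm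
  set P : H →L[ℂ] V := V.orthogonalProjectionOnto with hP
  set B : H →L[ℂ] H := V.subtypeL ∘L ((Ycl - m • (1 : V →L[ℂ] V)) ∘L P) with hB
  refine ⟨B, m, ?_, ?_⟩
  · -- finite rank of B
    have hle : LinearMap.range (B : H →ₗ[ℂ] H) ≤ V := by
      rintro _ ⟨x, rfl⟩
      exact ((Ycl - m • (1 : V →L[ℂ] V)) (P x)).2
    exact Submodule.finiteDimensional_of_le hle
  · set Y : H →L[ℂ] H := B + m • (1 : H →L[ℂ] H) with hY
    have key1 : ∀ v : V, X (Y (X v)) = X v := by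
      intro v
      have hXv : X (v : H) = ((XV v : V) : H) := rfl
      have hPXv : P ((XV v : V) : H) = XV v := Submodule.orthogonalProjectionOnto_mem_subspace_eq_self _
      have hBXv : B (X v) = ((Ycl (XV v) : V) : H) - m • ((XV v : V) : H) := by
        rw [hXv, hB]
        simp [hPXv]
      have hYXv : Y (X v) = ((YV (XV v) : V) : H) := by
        rw [hY]
        rw [hXv] at hBXv
        simp only [ContinuousLinearMap.add_apply, ContinuousLinearMap.smul_apply,
          ContinuousLinearMap.one_apply]
        have hYc : Ycl (XV v) = YV (XV v) := rfl
        rw [hXv, hBXv, hYc]; abel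
      rw [hYXv, hXv]
      have h1 : X ((YV (XV v) : V) : H) = ((XV (YV (XV v)) : V) : H) := rfl
      have h2 : XV (YV (XV v)) = XV v := LinearMap.congr_fun hYV v
      rw [h1, h2]
    have key2 : ∀ w ∈ Vᗮ, X (Y (X w)) = X w := by
      intro w hw
      have hXw' : X w = l • w := hXw w hw
      have hlw : l • w ∈ Vᗮ := Vᗮ.smul_mem l hw
      have hPlw : P (l • w) = 0 :=
        Submodule.orthogonalProjectionOnto_apply_of_mem_orthogonal hlw
      have hBXw : B (X w) = 0 := by
        rw [hXw', hB]
        simp only [ContinuousLinearMap.comp_apply, hPlw, map_zero]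
      have hYXw : Y (X w) = (m * l) • w := by
        rw [hY]
        simp only [ContinuousLinearMap.add_apply, ContinuousLinearMap.smul_apply,
          ContinuousLinearMap.one_apply]
        rw [hBXw, zero_add, hXw', smul_smul]
      rw [hYXw]
      have : X ((m * l) • w) = (m * l) • (l • w) := by
        rw [map_smul, hXw']
      rw [this, hXw', smul_smul]
      congr 1
      by_cases hl : l = 0
      · simp [hl]
      · rw [hm, if_neg hl, inv_mul_cancel₀ hl, one_mul]
    ext x
    have hxmem : x - (P x : H) ∈ Vᗮ := Submodule.sub_starProjection_mem_orthogonal (K := V) x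
    have hx2 : x = (P x : H) + (x - (P x : H)) := by abel
    show X (Y (X x)) = X x
    calc X (Y (X x)) = X (Y (X ((P x : H) + (x - (P x : H))))) := by rw [← hx2]
      _ = X (Y (X (P x : H))) + X (Y (X (x - (P x : H)))) := by simp [map_add]
      _ = X (P x : H) + X (x - (P x : H)) := by rw [key1 (P x), key2 _ hxmem]
      _ = X x := by rw [← map_add, ← hx2]
end

section
/- Let H be a complex Hilbert space and let Q be a bounded operator on H with Q ∘ Q = Q. Then the spectrum of the operator |Q| = √(Q* ∘ Q) is contained in {0} ∪ [1, ‖Q‖]; in particular, the spectrum of |Q| contains no point of the open interval (0, 1). -/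
set_option synthInstance.maxHeartbeats 1000000
set_option maxHeartbeats 1000000

open ContinuousLinearMap in
/-- Theorem 3.7 for `M = B(H)`, bounded case: if `Q` is a bounded idempotent on a
complex Hilbert space, then the spectrum of `|Q| = √(Q* ∘ Q)` is contained in
`{0} ∪ [1, ‖Q‖]`; in particular it misses the open interval `(0, 1)`. -/
theorem spectrum_abs_idempotent
    {H : Type*} [NormedAddCommGroup H] [InnerProductSpace ℂ H] [CompleteSpace H]
    (Q : H →L[ℂ] H) (h : Q * Q = Q) :
    spectrum ℝ (CFC.sqrt (adjoint Q * Q)) ⊆ {0} ∪ Set.Icc 1 ‖Q‖ := by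
  set A : H →L[ℂ] H := adjoint Q * Q with hAdef
  have hA0 : (0 : H →L[ℂ] H) ≤ A := by
    simpa [hAdef, star_eq_adjoint] using star_mul_self_nonneg Q
  have hAsa : IsSelfAdjoint A := IsSelfAdjoint.of_nonneg hA0
  have hAQ : A * Q = A := by rw [hAdef, mul_assoc, h]
  -- re ⟪A x, x⟫ = ‖Q x‖ ^ 2
  have hre : ∀ x : H, RCLike.re (inner ℂ (A x) x) = ‖Q x‖ ^ 2 := by
    intro x
    rw [hAdef]
    simp only [ContinuousLinearMap.mul_apply]
    rw [adjoint_inner_left, inner_self_eq_norm_sq]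
  -- key: ‖Q x‖ ≤ ‖A x‖
  have hkey : ∀ x : H, ‖Q x‖ ≤ ‖A x‖ := by
    intro x
    have hQx : Q (Q x) = Q x := by
      have := congrArg (fun T : H →L[ℂ] H => T x) h
      simpa [ContinuousLinearMap.mul_apply] using this
    have h1 : ‖Q x‖ * ‖Q x‖ ≤ ‖A (Q x)‖ * ‖Q x‖ := by
      calc ‖Q x‖ * ‖Q x‖ = ‖Q (Q x)‖ ^ 2 := by rw [hQx]; ring
        _ = RCLike.re (inner ℂ (A (Q x)) (Q x)) := (hre (Q x)).symm
        _ ≤ ‖(inner ℂ (A (Q x)) (Q x))‖ := RCLike.re_le_norm _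
        _ ≤ ‖A (Q x)‖ * ‖Q x‖ := norm_inner_le_norm _ _
    have hAQx : A (Q x) = A x := by rw [← ContinuousLinearMap.mul_apply, hAQ]
    rcases eq_or_ne (Q x) 0 with h0 | h0
    · simp [h0]
    · rw [hAQx] at h1
      exact le_of_mul_le_mul_right h1 (norm_pos_iff.mpr h0)
  -- operator inequality A ≤ A ^ 2
  have key : A ≤ A ^ 2 := by
    rw [le_def]
    refine ⟨isSelfAdjoint_iff_isSymmetric.mp ((hAsa.pow 2).sub hAsa), fun x => ?_⟩
    rw [reApplyInnerSelf_apply]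
    have hx2 : (A ^ 2 - A) x = A (A x) - A x := by simp [pow_two, ContinuousLinearMap.mul_apply]
    rw [hx2, inner_sub_left, map_sub]
    have hsymm := isSelfAdjoint_iff_isSymmetric.mp hAsa
    have h2 : RCLike.re (inner ℂ (A (A x)) x) = ‖A x‖ ^ 2 := by
      have h3 : (inner ℂ (A (A x)) x) = inner ℂ (A x) (A x) := hsymm (A x) x
      rw [h3, inner_self_eq_norm_sq]
    rw [h2, hre x]
    nlinarith [hkey x, norm_nonneg (Q x), norm_nonneg (A x)]
  -- spectrum of A
  have hspecA : spectrum ℝ A ⊆ {0} ∪ Set.Icc 1 (‖Q‖ ^ 2) := by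
    intro μ hμ
    have hμ0 : 0 ≤ μ := spectrum_nonneg_of_nonneg hA0 hμ
    have hμn : μ ≤ ‖Q‖ ^ 2 := by
      have h1 := (Real.le_norm_self μ).trans (spectrum.norm_le_norm_mul_of_mem hμ)
      have h2 : ‖A‖ = ‖Q‖ ^ 2 := by
        rw [hAdef, ← star_eq_adjoint, CStarRing.norm_star_mul_self]; ring
      have h3 : ‖(1 : H →L[ℂ] H)‖ ≤ 1 := by
        rw [ContinuousLinearMap.one_def]; exact ContinuousLinearMap.norm_id_le
      nlinarith [norm_nonneg A, norm_nonneg (1 : H →L[ℂ] H)]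
    have hc : cfc (fun t : ℝ => t ^ 2 - t) A = A ^ 2 - A := by
      rw [cfc_sub (fun t : ℝ => t ^ 2) (fun t : ℝ => t) A, cfc_pow_id A 2, cfc_id' ℝ A]
    have hmem : μ ^ 2 - μ ∈ spectrum ℝ (A ^ 2 - A) := by
      rw [← hc, cfc_map_spectrum (fun t : ℝ => t ^ 2 - t) A]
      exact ⟨μ, hμ, rfl⟩
    have hnn : 0 ≤ μ ^ 2 - μ :=
      spectrum_nonneg_of_nonneg (sub_nonneg.mpr key) hmem
    rcases eq_or_lt_of_le hμ0 with h0 | h0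
    · exact Or.inl h0.symm
    · refine Or.inr ⟨?_, hμn⟩
      nlinarith
  -- conclude
  intro μ hμ
  have hB0 : (0 : H →L[ℂ] H) ≤ CFC.sqrt A := CFC.sqrt_nonneg (a := A)
  have hBsa : IsSelfAdjoint (CFC.sqrt A) := IsSelfAdjoint.of_nonneg hB0
  have hμ0 : 0 ≤ μ := spectrum_nonneg_of_nonneg hB0 hμ
  have hsq : μ ^ 2 ∈ spectrum ℝ A := by
    have : (CFC.sqrt A) ^ 2 = A := CFC.sq_sqrt A hA0
    rw [← this, ← cfc_pow_id (R := ℝ) (CFC.sqrt A) 2, cfc_map_spectrum (fun t : ℝ => t ^ 2) (CFC.sqrt A)]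
    exact ⟨μ, hμ, rfl⟩
  rcases hspecA hsq with h0 | ⟨h1, h2⟩
  · left
    simp only [Set.mem_singleton_iff] at h0 ⊢
    exact pow_eq_zero_iff two_ne_zero |>.mp h0
  · right
    have hQn : (0:ℝ) ≤ ‖Q‖ := norm_nonneg Q
    constructor <;> nlinarith
end

section
/- Let H be a complex Hilbert space and let X be a bounded operator on H such that X ∘ X = X and X = A + λ·1 for some compact operator A and complex number λ. Then there exists a bounded operator P on H of finite rank with P ∘ P = P such that X = P or X = 1 − P. -/
open Metric Set

/-- If the identity is a compact operator, the space is finite-dimensional. -/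
lemma aux_id_compact_finiteDim
    {H : Type*} [NormedAddCommGroup H] [InnerProductSpace ℂ H]
    (h : IsCompactOperator (1 : H →L[ℂ] H)) : FiniteDimensional ℂ H := by
  obtain ⟨K, hK, hKmem⟩ := h
  have hK0 : K ∈ nhds (0 : H) := by
    have heq : (1 : H →L[ℂ] H) ⁻¹' K = K := by
      ext x; simp
    rwa [heq] at hKmem
  obtain ⟨r, hr, hball⟩ := Metric.nhds_basis_closedBall.mem_iff.mp hK0
  exact FiniteDimensional.of_isCompact_closedBall₀ (𝕜 := ℂ) hr
    (hK.of_isClosed_subset Metric.isClosed_closedBall hball)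

/-- A compact idempotent operator has finite-dimensional range. -/
lemma aux_compact_idem_finiteRank
    {H : Type*} [NormedAddCommGroup H] [InnerProductSpace ℂ H]
    (P : H →L[ℂ] H) (hP : IsCompactOperator P) (hidem : P * P = P) :
    FiniteDimensional ℂ (LinearMap.range (P : H →ₗ[ℂ] H)) := by
  set S : Submodule ℂ H := LinearMap.range (P : H →ₗ[ℂ] H) with hS
  have hmem : ∀ x : H, x ∈ S ↔ P x = x := by
    intro x
    constructor
    · rintro ⟨y, rfl⟩
      have := DFunLike.congr_fun hidem y
      simpa using this
    · intro hx; exact ⟨x, hx⟩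
  obtain ⟨K, hK, hPK⟩ := hP.image_closedBall_subset_compact 1
  have hsub : (Subtype.val '' (Metric.closedBall (0 : S) 1)) ⊆ K := by
    rintro x ⟨⟨y, hy⟩, hby, rfl⟩
    have hny : ‖y‖ ≤ 1 := by
      simpa [Metric.mem_closedBall, dist_zero_right] using hby
    exact hPK ⟨y, by simpa [Metric.mem_closedBall, dist_zero_right] using hny,
      (hmem y).mp hy⟩
  have hclosedS : IsClosed (S : Set H) := by
    have heq : (S : Set H) = {x : H | P x = x} := by ext x; exact hmem x
    rw [heq]
    exact isClosed_eq P.continuous continuous_id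
  have himclosed : IsClosed (Subtype.val '' (Metric.closedBall (0 : S) 1)) := by
    have heq : Subtype.val '' (Metric.closedBall (0 : S) 1)
        = (S : Set H) ∩ Metric.closedBall (0 : H) 1 := by
      ext x
      constructor
      · rintro ⟨⟨y, hy⟩, hby, rfl⟩
        exact ⟨hy, by simpa [Metric.mem_closedBall, dist_zero_right] using hby⟩
      · rintro ⟨hx, hb⟩
        exact ⟨⟨x, hx⟩, by simpa [Metric.mem_closedBall, dist_zero_right] using hb, rfl⟩
    rw [heq]
    exact hclosedS.inter Metric.isClosed_closedBall
  have hcompactim : IsCompact (Subtype.val '' (Metric.closedBall (0 : S) 1)) :=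
    hK.of_isClosed_subset himclosed hsub
  have hcompact : IsCompact (Metric.closedBall (0 : S) 1) :=
    Topology.IsEmbedding.subtypeVal.isCompact_iff.mpr hcompactim
  exact FiniteDimensional.of_isCompact_closedBall₀ (𝕜 := ℂ) one_pos hcompact

/-- Lemmas 3.3 and 3.4 combined, for `M = B(H)`: every idempotent of the algebra
`K(H) + ℂ·1` is of the form `P` or `1 - P` with `P` a finite-rank idempotent. -/
theorem idempotent_compact_plus_scalar_form
    {H : Type*} [NormedAddCommGroup H] [InnerProductSpace ℂ H] [CompleteSpace H]
    (A : H →L[ℂ] H) (hA : IsCompactOperator A) (l : ℂ)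
    (X : H →L[ℂ] H) (hX : X = A + l • (1 : H →L[ℂ] H)) (h : X * X = X) :
    ∃ P : H →L[ℂ] H, FiniteDimensional ℂ (LinearMap.range (P : H →ₗ[ℂ] H)) ∧ P * P = P ∧
      (X = P ∨ X = 1 - P) := by
  by_cases hfin : FiniteDimensional ℂ H
  · exact ⟨X, inferInstance, h, Or.inl rfl⟩
  -- infinite-dimensional case : l = 0 or l = 1
  have hAA : IsCompactOperator (A * A : H →L[ℂ] H) := by
    have heq : ⇑(A * A) = ⇑A ∘ ⇑A := by ext x; simp
    rw [heq]
    exact hA.comp_clm A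
  have h2 : (A + l • (1 : H →L[ℂ] H)) * (A + l • 1) = A + l • 1 := by
    rw [← hX]; exact h
  have h3 : A * A + l • A + l • A + (l * l) • (1 : H →L[ℂ] H) = A + l • 1 := by
    conv_rhs => rw [← h2]
    simp only [mul_add, add_mul, smul_mul_assoc, mul_smul_comm, smul_smul, smul_add, mul_one, one_mul]
    abel
  have key : (l * l - l) • (1 : H →L[ℂ] H) = A - A * A - l • A - l • A := by
    have h4 := congrArg
      (fun T : H →L[ℂ] H => T - (A * A) - l • A - l • A - l • (1 : H →L[ℂ] H)) h3
    simp only [sub_smul] at h4 ⊢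
    abel_nf at h4 ⊢
    convert h4 using 2
  have hlc : IsCompactOperator ((l * l - l) • (1 : H →L[ℂ] H)) := by
    rw [key]
    have heq : ⇑(A - A * A - l • A - l • A) = (⇑A - ⇑(A * A)) - l • ⇑A - l • ⇑A := by
      ext x; simp
    rw [heq]
    exact (((hA.sub hAA).sub (hA.smul l)).sub (hA.smul l))
  have hl : l * l - l = 0 := by
    by_contra hne
    apply hfin
    apply aux_id_compact_finiteDim
    have hsm := hlc.smul (l * l - l)⁻¹
    have heq : (l * l - l)⁻¹ • ⇑((l * l - l) • (1 : H →L[ℂ] H)) = ⇑(1 : H →L[ℂ] H) := by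
      ext x
      simp [smul_smul, inv_mul_cancel₀ hne]
    rwa [heq] at hsm
  have hl' : l = 0 ∨ l = 1 := by
    rcases mul_eq_zero.mp (show l * (l - 1) = 0 by linear_combination hl) with h0 | h1
    · exact Or.inl h0
    · exact Or.inr (by linear_combination h1)
  rcases hl' with rfl | rfl
  · -- l = 0 : X = A is compact
    have hXc : IsCompactOperator X := by
      rw [hX]; simpa using hA
    exact ⟨X, aux_compact_idem_finiteRank X hXc h, h, Or.inl rfl⟩
  · -- l = 1 : 1 - X = -A is compact
    refine ⟨1 - X, ?_, IsIdempotentElem.one_sub h, Or.inr (by abel)⟩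
    have hXc : IsCompactOperator (1 - X : H →L[ℂ] H) := by
      have heq1 : (1 - X : H →L[ℂ] H) = -A := by rw [hX, one_smul]; abel
      rw [heq1]
      have heq2 : ⇑(-A : H →L[ℂ] H) = -⇑A := by ext x; simp
      rw [heq2]
      exact hA.neg
    exact aux_compact_idem_finiteRank _ hXc (IsIdempotentElem.one_sub h)
end
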